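/- Let G be a nonempty finite set with |G| = n, and for each g ∈ G let a_g ≤ b_g be reals. Assume there exists a real p* with a_g ≤ p* ≤ b_g for every g ∈ G. Then for every s ∈ {1,…,n}, the union over all subsets S ⊆ G with |S| = s of the intervals [∑_{g∈S} a_g, ∑_{g∈S} b_g] equals the single closed interval [min_{|S|=s} ∑_{g∈S} a_g, max_{|S|=s} ∑_{g∈S} b_g] (each such interval contains s·p*). Consequently, the union over all nonempty subsets S ⊆ G of [∑_{g∈S} a_g, ∑_{g∈S} b_g] can be written as a union of at most n closed intervals. -/

import Mathlib

open Finset in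
/-- Let `G` be a nonempty finite set with `|G| = n` and `a g ≤ b g` reals for
`g ∈ G`, and assume there is a real `p⋆` with `a g ≤ p⋆ ≤ b g` for every
`g ∈ G`.  Then for every `s ∈ {1, …, n}`, the union over all subsets `S ⊆ G`
with `|S| = s` of the intervals `[∑_{g∈S} a g, ∑_{g∈S} b g]` equals the single
closed interval `[min_{|S|=s} ∑_{g∈S} a g, max_{|S|=s} ∑_{g∈S} b g]` (and each
such interval contains `s * p⋆`).  Consequently, the union over all nonempty
subsets `S ⊆ G` of `[∑_{g∈S} a g, ∑_{g∈S} b g]` can be written as a union of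
at most `n` closed intervals. -/
theorem union_Icc_card_eq_single_interval {ι : Type*} (G : Finset ι)
    (hG : G.Nonempty) (n : ℕ) (hn : G.card = n) (a b : ι → ℝ)
    (hab : ∀ g ∈ G, a g ≤ b g) (p : ℝ) (hp : ∀ g ∈ G, a g ≤ p ∧ p ≤ b g) :
    (∀ s : ℕ, 1 ≤ s → s ≤ n →
      ∃ m M : ℝ,
        IsLeast ((fun S : Finset ι => ∑ g ∈ S, a g) ''
          {S : Finset ι | S ⊆ G ∧ S.card = s}) m ∧
        IsGreatest ((fun S : Finset ι => ∑ g ∈ S, b g) ''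
          {S : Finset ι | S ⊆ G ∧ S.card = s}) M ∧
        (⋃ S ∈ {S : Finset ι | S ⊆ G ∧ S.card = s},
            Set.Icc (∑ g ∈ S, a g) (∑ g ∈ S, b g)) = Set.Icc m M ∧
        (∀ S : Finset ι, S ⊆ G → S.card = s →
          (s : ℝ) * p ∈ Set.Icc (∑ g ∈ S, a g) (∑ g ∈ S, b g))) ∧
    (∃ A B : Fin n → ℝ,
      (⋃ S ∈ {S : Finset ι | S ⊆ G ∧ S.Nonempty},
          Set.Icc (∑ g ∈ S, a g) (∑ g ∈ S, b g)) =
        ⋃ i, Set.Icc (A i) (B i)) := by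
  subst hn
  have key : ∀ S : Finset ι, S ⊆ G →
      (∑ g ∈ S, a g) ≤ (S.card : ℝ) * p ∧ (S.card : ℝ) * p ≤ ∑ g ∈ S, b g := by
    intro S hSG
    constructor
    · calc ∑ g ∈ S, a g ≤ ∑ _g ∈ S, p :=
            Finset.sum_le_sum (fun g hg => (hp g (hSG hg)).1)
        _ = (S.card : ℝ) * p := by rw [Finset.sum_const, nsmul_eq_mul]
    · calc (S.card : ℝ) * p = ∑ _g ∈ S, p := by rw [Finset.sum_const, nsmul_eq_mul]
        _ ≤ ∑ g ∈ S, b g := Finset.sum_le_sum (fun g hg => (hp g (hSG hg)).2)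
  have main : ∀ s : ℕ, 1 ≤ s → s ≤ G.card →
      ∃ m M : ℝ,
        IsLeast ((fun S : Finset ι => ∑ g ∈ S, a g) ''
          {S : Finset ι | S ⊆ G ∧ S.card = s}) m ∧
        IsGreatest ((fun S : Finset ι => ∑ g ∈ S, b g) ''
          {S : Finset ι | S ⊆ G ∧ S.card = s}) M ∧
        (⋃ S ∈ {S : Finset ι | S ⊆ G ∧ S.card = s},
            Set.Icc (∑ g ∈ S, a g) (∑ g ∈ S, b g)) = Set.Icc m M ∧
        (∀ S : Finset ι, S ⊆ G → S.card = s →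
          (s : ℝ) * p ∈ Set.Icc (∑ g ∈ S, a g) (∑ g ∈ S, b g)) := by
    intro s hs1 hs2
    have hmemT : ∀ S : Finset ι, S ∈ G.powersetCard s ↔ (S ⊆ G ∧ S.card = s) := by
      intro S; exact Finset.mem_powersetCard
    have hTne : (G.powersetCard s).Nonempty := by
      obtain ⟨t, ht, htc⟩ := Finset.exists_subset_card_eq hs2
      exact ⟨t, (hmemT t).2 ⟨ht, htc⟩⟩
    obtain ⟨S₀, hS₀, hS₀min⟩ := Finset.exists_min_image (G.powersetCard s)
      (fun S => ∑ g ∈ S, a g) hTne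
    obtain ⟨S₁, hS₁, hS₁max⟩ := Finset.exists_max_image (G.powersetCard s)
      (fun S => ∑ g ∈ S, b g) hTne
    have hS₀' := (hmemT S₀).1 hS₀
    have hS₁' := (hmemT S₁).1 hS₁
    have hmid : ∀ S : Finset ι, S ⊆ G → S.card = s →
        (s : ℝ) * p ∈ Set.Icc (∑ g ∈ S, a g) (∑ g ∈ S, b g) := by
      intro S hSG hSc
      obtain ⟨h1, h2⟩ := key S hSG
      rw [hSc] at h1 h2
      exact ⟨h1, h2⟩
    refine ⟨∑ g ∈ S₀, a g, ∑ g ∈ S₁, b g, ?_, ?_, ?_, hmid⟩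
    · refine ⟨⟨S₀, hS₀', rfl⟩, ?_⟩
      rintro x ⟨S, hS, rfl⟩
      exact hS₀min S ((hmemT S).2 hS)
    · refine ⟨⟨S₁, hS₁', rfl⟩, ?_⟩
      rintro x ⟨S, hS, rfl⟩
      exact hS₁max S ((hmemT S).2 hS)
    · ext x
      simp only [Set.mem_iUnion, Set.mem_setOf_eq, Set.mem_Icc, exists_prop]
      constructor
      · rintro ⟨S, ⟨hSG, hSc⟩, hx1, hx2⟩
        exact ⟨le_trans (hS₀min S ((hmemT S).2 ⟨hSG, hSc⟩)) hx1,
          le_trans hx2 (hS₁max S ((hmemT S).2 ⟨hSG, hSc⟩))⟩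
      · rintro ⟨hx1, hx2⟩
        rcases le_total x ((s : ℝ) * p) with h | h
        · exact ⟨S₀, hS₀', hx1, le_trans h (hmid S₀ hS₀'.1 hS₀'.2).2⟩
        · exact ⟨S₁, hS₁', le_trans (hmid S₁ hS₁'.1 hS₁'.2).1 h, hx2⟩
  refine ⟨main, ?_⟩
  choose m M hm hM hU hmid using main
  have hle : ∀ i : Fin G.card, 1 ≤ (i : ℕ) + 1 := fun i => Nat.le_add_left 1 i
  have hle' : ∀ i : Fin G.card, (i : ℕ) + 1 ≤ G.card := fun i => i.isLt
  refine ⟨fun i => m ((i : ℕ) + 1) (hle i) (hle' i),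
    fun i => M ((i : ℕ) + 1) (hle i) (hle' i), ?_⟩
  ext x
  simp only [Set.mem_iUnion, Set.mem_setOf_eq, exists_prop]
  constructor
  · rintro ⟨S, ⟨hSG, hSne⟩, hx⟩
    have h1 : 1 ≤ S.card := Finset.one_le_card.2 hSne
    have h2 : S.card ≤ G.card := Finset.card_le_card hSG
    refine ⟨⟨S.card - 1, by omega⟩, ?_⟩
    have hcard : ((⟨S.card - 1, by omega⟩ : Fin G.card) : ℕ) + 1 = S.card := by
      simp; omega
    rw [← hU _ (hle _) (hle' _)]
    simp only [Set.mem_iUnion, Set.mem_setOf_eq, exists_prop]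
    exact ⟨S, ⟨hSG, by rw [hcard]⟩, hx⟩
  · rintro ⟨i, hx⟩
    rw [← hU _ (hle i) (hle' i)] at hx
    simp only [Set.mem_iUnion, Set.mem_setOf_eq, exists_prop] at hx
    obtain ⟨S, ⟨hSG, hSc⟩, hx⟩ := hx
    exact ⟨S, ⟨hSG, Finset.card_pos.1 (by omega)⟩, hx⟩
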